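/- arXiv:1709.07314 — 4 statements merged into one kernel-verified Lean document; each statement's English description precedes it below -/
import Mathlib

section
/- Let T be an EL_lhs TBox (all concept inclusions have a concept name on the right-hand side). If I is an essential T-countermodel, then the cardinality of the domain of I is at most the size of T. -/
/-- EL concept expressions over concept names `C` and role names `R`. -/
inductive ELC (C R : Type) : Type where
  | top : ELC C R
  | cn : C → ELC C R
  | conj : ELC C R → ELC C R → ELC C R
  | ex : R → ELC C R → ELC C R

/-- An interpretation (possibly with empty domain, so that subtree removal
is always defined). -/
structure Interp (C R : Type) where
  dom : Type
  cname : C → Set dom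
  rname : R → Set (dom × dom)

/-- Semantics of EL concept expressions. -/
def Interp.sem {C R : Type} (I : Interp C R) : ELC C R → Set I.dom
  | .top => Set.univ
  | .cn A => I.cname A
  | .conj c d => I.sem c ∩ I.sem d
  | .ex r c => {x | ∃ y, (x, y) ∈ I.rname r ∧ y ∈ I.sem c}

/-- The edge relation of the underlying directed graph: union of all role
interpretations. -/
def Interp.edge {C R : Type} (I : Interp C R) (a b : I.dom) : Prop :=
  ∃ r, (a, b) ∈ I.rname r

/-- The restriction of an interpretation to a subset of its domain. -/
def Interp.restrict {C R : Type} (I : Interp C R) (S : Set I.dom) : Interp C R where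
  dom := {x // x ∈ S}
  cname A := {x | x.1 ∈ I.cname A}
  rname r := {p | (p.1.1, p.2.1) ∈ I.rname r}

/-- An `EL_lhs` TBox: a finite set (list) of concept inclusions `C ⊑ A`
with `C` an EL concept expression and `A` a concept name. -/
def Interp.satT {C R : Type} (I : Interp C R) (T : List (ELC C R × C)) : Prop :=
  ∀ p ∈ T, I.sem p.1 ⊆ I.cname p.2

/-- A ditree interpretation: the underlying directed graph is a directed
tree with root `root`, and distinct role names have disjoint
interpretations. -/
structure Ditree (C R : Type) extends Interp C R where
  root : toInterp.dom
  no_into_root : ∀ a : toInterp.dom, ¬ toInterp.edge a root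
  unique_parent : ∀ b a a' : toInterp.dom, ∀ r r' : R,
      (a, b) ∈ toInterp.rname r → (a', b) ∈ toInterp.rname r' → a = a' ∧ r = r'
  reach_root : ∀ b : toInterp.dom, Relation.ReflTransGen toInterp.edge root b
  role_disj : ∀ r r' : R, r ≠ r' → ∀ p, p ∈ toInterp.rname r → p ∉ toInterp.rname r'

/-- The size of a concept expression: the length of its string
representation, with concept and role names of length one. -/
def ELC.size {C R : Type} : ELC C R → ℕ
  | .top => 1
  | .cn _ => 1
  | .conj c d => c.size + d.size + 1
  | .ex _ c => c.size + 2

/-- The size of an `EL_lhs` TBox. -/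
def tboxSize {C R : Type} (T : List (ELC C R × C)) : ℕ :=
  (T.map fun p => p.1.size + 1).sum

/-- `D` is an essential `T`-countermodel: it is not a model of `T`, it
becomes a model of `T` when its root is removed, and it becomes a model of
`T` when the subtree rooted at any non-root node is removed. -/
def Essential {C R : Type} (T : List (ELC C R × C)) (D : Ditree C R) : Prop :=
  (¬ D.toInterp.satT T) ∧
  (D.toInterp.restrict {x | x ≠ D.root}).satT T ∧
  ∀ d : D.toInterp.dom, d ≠ D.root →
    (D.toInterp.restrict {x | ¬ Relation.ReflTransGen D.toInterp.edge d x}).satT T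

/-- Positive-existential formulas are preserved when restricting, downwards:
a point satisfying a concept in a restriction satisfies it in the full model. -/
lemma sem_restrict_subset {C R : Type} (I : Interp C R) (U : Set I.dom) (c : ELC C R) :
    ∀ x : (I.restrict U).dom, x ∈ (I.restrict U).sem c → x.1 ∈ I.sem c := by
  induction c with
  | top => intro x _; trivial
  | cn A => intro x hx; exact hx
  | conj c d ihc ihd =>
      intro x hx
      exact ⟨ihc x hx.1, ihd x hx.2⟩
  | ex r c ih =>
      rintro x ⟨y, hr, hy⟩
      exact ⟨y.1, hr, ih y hy⟩

/-- If all points reachable from `x` are in `U`, satisfaction at `x` transfers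
to the restriction to `U`. -/
lemma sem_restrict_of_closed {C R : Type} (I : Interp C R) (U : Set I.dom) (c : ELC C R) :
    ∀ x (hx : x ∈ U), (∀ z, Relation.ReflTransGen I.edge x z → z ∈ U) →
      x ∈ I.sem c → (⟨x, hx⟩ : (I.restrict U).dom) ∈ (I.restrict U).sem c := by
  induction c with
  | top => intro x hx _ _; trivial
  | cn A => intro x hx _ h; exact h
  | conj c d ihc ihd =>
      intro x hx hcl h
      exact ⟨ihc x hx hcl h.1, ihd x hx hcl h.2⟩
  | ex r c ih =>
      rintro x hx hcl ⟨y, hr, hy⟩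
      have hxy : I.edge x y := ⟨r, hr⟩
      have hyU : y ∈ U := hcl y (Relation.ReflTransGen.single hxy)
      refine ⟨⟨y, hyU⟩, hr, ih y hyU (fun z hz => hcl z (Relation.ReflTransGen.head hxy hz)) hy⟩

/-- Witness set lemma: if `x` satisfies `c`, there is a set `S` of size at most
`c.size` such that removing the subtree rooted at any `d ∉ S` that does not
reach `x` preserves satisfaction of `c` at `x`. -/
lemma witness_set {C R : Type} (D : Ditree C R) (c : ELC C R) :
    ∀ x, x ∈ D.toInterp.sem c → ∃ S : Set D.toInterp.dom, S.Finite ∧ S.ncard ≤ c.size ∧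
      ∀ d, d ∉ S → ∀ hdx : ¬ Relation.ReflTransGen D.toInterp.edge d x,
        (⟨x, hdx⟩ : (D.toInterp.restrict
            {z | ¬ Relation.ReflTransGen D.toInterp.edge d z}).dom) ∈
          (D.toInterp.restrict {z | ¬ Relation.ReflTransGen D.toInterp.edge d z}).sem c := by
  induction c with
  | top =>
      intro x _
      exact ⟨∅, Set.finite_empty, by simp [ELC.size], fun d _ hdx => trivial⟩
  | cn A =>
      intro x hx
      exact ⟨∅, Set.finite_empty, by simp [ELC.size], fun d _ hdx => hx⟩
  | conj c d ihc ihd =>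
      intro x hx
      obtain ⟨S1, hf1, hc1, h1⟩ := ihc x hx.1
      obtain ⟨S2, hf2, hc2, h2⟩ := ihd x hx.2
      refine ⟨S1 ∪ S2, hf1.union hf2, ?_, ?_⟩
      · calc (S1 ∪ S2).ncard ≤ S1.ncard + S2.ncard := Set.ncard_union_le S1 S2
          _ ≤ c.size + d.size := Nat.add_le_add hc1 hc2
          _ ≤ _ := by simp [ELC.size]
      · intro e he hex
        exact ⟨h1 e (fun h => he (Or.inl h)) hex, h2 e (fun h => he (Or.inr h)) hex⟩
  | ex r c ih =>
      rintro x ⟨y, hr, hy⟩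
      obtain ⟨S, hf, hc, hS⟩ := ih y hy
      refine ⟨insert y S, hf.insert y, ?_, ?_⟩
      · calc (insert y S).ncard ≤ S.ncard + 1 := Set.ncard_insert_le y S
          _ ≤ c.size + 1 := Nat.add_le_add_right hc 1
          _ ≤ _ := by simp [ELC.size]
      · intro e he hex
        have hney : e ≠ y := fun h => he (h ▸ Set.mem_insert y S)
        have hey : ¬ Relation.ReflTransGen D.toInterp.edge e y := by
          intro hr'
          rcases Relation.ReflTransGen.cases_tail hr' with h | ⟨z, hez, hzy⟩
          · exact hney h.symm
          · obtain ⟨r', hr'⟩ := hzy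
            have := (D.unique_parent y z x r' r hr' hr).1
            exact hex (this ▸ hez)
        exact ⟨⟨y, hey⟩, hr, hS e (fun h => he (Set.mem_insert_of_mem y h)) hey⟩

lemma not_reach_root {C R : Type} (D : Ditree C R) {d : D.toInterp.dom}
    (hd : d ≠ D.root) : ¬ Relation.ReflTransGen D.toInterp.edge d D.root := by
  intro hr
  rcases Relation.ReflTransGen.cases_tail hr with h | ⟨z, _, hz⟩
  · exact hd h.symm
  · exact D.no_into_root z hz

/-- an essential `T`-countermodel has at most `|T|` elements. -/
theorem essential_countermodel_small {C R : Type} (T : List (ELC C R × C))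
    (D : Ditree C R) (h : Essential T D) :
    Finite D.toInterp.dom ∧ Nat.card D.toInterp.dom ≤ tboxSize T := by
  obtain ⟨hns, hroot, hsub⟩ := h
  -- extract a violated inclusion
  simp only [Interp.satT, not_forall] at hns
  obtain ⟨p, hpT, hnsub⟩ := hns
  rw [Set.not_subset] at hnsub
  obtain ⟨x, hxc, hxA⟩ := hnsub
  -- the violation must be at the root
  have hxroot : x = D.root := by
    by_contra hne
    have hxU : x ∈ {z : D.toInterp.dom | z ≠ D.root} := hne
    have hcl : ∀ z, Relation.ReflTransGen D.toInterp.edge x z →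
        z ∈ {z : D.toInterp.dom | z ≠ D.root} := by
      intro z hz hzr
      exact not_reach_root D hne (hzr ▸ hz)
    have := hroot p hpT (sem_restrict_of_closed D.toInterp _ p.1 x hxU hcl hxc)
    exact hxA this
  subst hxroot
  -- witness set for the violation at the root
  obtain ⟨S, hSf, hSc, hS⟩ := witness_set D p.1 D.root hxc
  -- every non-root element belongs to S
  have hcov : (Set.univ : Set D.toInterp.dom) ⊆ insert D.root S := by
    intro d _
    by_cases hd : d = D.root
    · exact hd ▸ Set.mem_insert D.root S
    · right
      by_contra hdS
      have hdx : ¬ Relation.ReflTransGen D.toInterp.edge d D.root := not_reach_root D hd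
      have := hsub d hd p hpT (hS d hdS hdx)
      exact hxA this
  have hfin : (Set.univ : Set D.toInterp.dom).Finite :=
    Set.Finite.subset (hSf.insert D.root) hcov
  have hFin : Finite D.toInterp.dom := Set.finite_univ_iff.mp hfin
  refine ⟨hFin, ?_⟩
  have hsize : p.1.size + 1 ≤ tboxSize T := by
    have : p.1.size + 1 ∈ T.map (fun q => q.1.size + 1) :=
      List.mem_map.mpr ⟨p, hpT, rfl⟩
    exact List.single_le_sum (fun a _ => Nat.zero_le a) _ this
  calc Nat.card D.toInterp.dom = (Set.univ : Set D.toInterp.dom).ncard :=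
        (Set.ncard_univ _).symm
    _ ≤ (insert D.root S).ncard := Set.ncard_le_ncard hcov (hSf.insert D.root)
    _ ≤ S.ncard + 1 := Set.ncard_insert_le D.root S
    _ ≤ p.1.size + 1 := Nat.add_le_add_right hSc 1
    _ ≤ tboxSize T := hsize
end

section
/- The product I × J of two ditree interpretations I and J is a disjoint union of ditree interpretations. -/
/-- The product of two interpretations. -/
def Interp.prod {C R : Type} (I J : Interp C R) : Interp C R where
  dom := I.dom × J.dom
  cname A := {p | p.1 ∈ I.cname A ∧ p.2 ∈ J.cname A}
  rname r := {q | (q.1.1, q.2.1) ∈ I.rname r ∧ (q.1.2, q.2.2) ∈ J.rname r}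

/-- `I` is a disjoint union of ditree interpretations: distinct role names
have disjoint interpretations, every node has at most one incoming edge
(with a unique label), and every node is reachable by a directed path from
a node with no incoming edge (the root of its component); equivalently,
every weakly connected component of the underlying graph is a directed
tree. -/
def IsDitreeForest {C R : Type} (K : Interp C R) : Prop :=
  (∀ r r' : R, r ≠ r' → ∀ p, p ∈ K.rname r → p ∉ K.rname r') ∧
  (∀ b a a' : K.dom, ∀ r r' : R,
      (a, b) ∈ K.rname r → (a', b) ∈ K.rname r' → a = a' ∧ r = r') ∧
  ∀ x : K.dom, ∃ ρ : K.dom, (∀ a, ¬ K.edge a ρ) ∧ Relation.ReflTransGen K.edge ρ x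

/-- the product of two ditree interpretations is a disjoint
union of ditree interpretations. -/
theorem prod_ditree_forest {C R : Type} (D E : Ditree C R) :
    IsDitreeForest (D.toInterp.prod E.toInterp) := by
  refine ⟨?_, ?_, ?_⟩
  · rintro r r' hrr p ⟨h1, _⟩ ⟨h1', _⟩
    exact D.role_disj r r' hrr _ h1 h1'
  · rintro ⟨b1, b2⟩ ⟨a1, a2⟩ ⟨a1', a2'⟩ r r' ⟨hd, he⟩ ⟨hd', he'⟩
    obtain ⟨h1, hr⟩ := D.unique_parent b1 a1 a1' r r' hd hd'
    obtain ⟨h2, _⟩ := E.unique_parent b2 a2 a2' r r' he he'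
    exact ⟨by simp [h1, h2]; rfl, hr⟩
  · rintro ⟨d, e⟩
    have key : ∀ d : D.dom, Relation.ReflTransGen D.edge D.root d →
        ∀ e : E.dom, ∃ ρ : (D.toInterp.prod E.toInterp).dom,
          (∀ a, ¬ (D.toInterp.prod E.toInterp).edge a ρ) ∧
          Relation.ReflTransGen (D.toInterp.prod E.toInterp).edge ρ (d, e) := by
      intro d hd
      induction hd with
      | refl =>
        intro e
        refine ⟨(D.root, e), ?_, Relation.ReflTransGen.refl⟩
        rintro ⟨a1, a2⟩ ⟨r, hd1, _⟩
        exact D.no_into_root a1 ⟨r, hd1⟩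
      | @tail b c hb hbc ih =>
        intro e
        obtain ⟨r, hr⟩ := hbc
        by_cases h : ∃ e', (e', e) ∈ E.rname r
        · obtain ⟨e', he'⟩ := h
          obtain ⟨ρ, hρ1, hρ2⟩ := ih e'
          exact ⟨ρ, hρ1, hρ2.tail ⟨r, hr, he'⟩⟩
        · refine ⟨(c, e), ?_, Relation.ReflTransGen.refl⟩
          rintro ⟨a1, a2⟩ ⟨r', hd1, he1⟩
          obtain ⟨rfl, rfl⟩ := D.unique_parent c a1 b r' r hd1 hr
          exact h ⟨a2, he1⟩
    exact key d (D.reach_root d) e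
end

section
/- Fix role names r and s, and for a word σ = σ¹σ²...σⁿ ∈ {r,s}ⁿ let ∃σ.C abbreviate ∃σ¹.∃σ²...∃σⁿ.C. Let T_σ = {A ⊑ ∃σ.M ⊓ X_0} ∪ T_0 where T_0 = {X_i ⊑ ∃r.X_{i+1} ⊓ ∃s.X_{i+1} : 0 ≤ i < n}. Then for distinct words σ, σ' ∈ {r,s}ⁿ of length n, T_σ does not entail A ⊑ ∃σ'.M. -/
/-- The pairwise distinct concept names `A`, `M`, `X_0, X_1, …`. -/
inductive CN : Type where
  | A : CN
  | M : CN
  | X : ℕ → CN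

/-- The two distinct role names `r` and `s`. -/
inductive RN : Type where
  | r : RN
  | s : RN

/-- `∃σ.C` for a word `σ` over `{r,s}`: nested existential restrictions. -/
def exSeq (w : List RN) (c : ELC CN RN) : ELC CN RN :=
  w.foldr ELC.ex c

/-- The TBox `T_0 = {X_i ⊑ ∃r.X_{i+1} ⊓ ∃s.X_{i+1} : 0 ≤ i < n}`. -/
def T0 (n : ℕ) : List (ELC CN RN × ELC CN RN) :=
  (List.range n).map fun i =>
    (.cn (.X i), .conj (.ex .r (.cn (.X (i + 1)))) (.ex .s (.cn (.X (i + 1)))))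

/-- The TBox `T_σ = {A ⊑ ∃σ.M ⊓ X_0} ∪ T_0`. -/
def Tsig (n : ℕ) (σ : List RN) : List (ELC CN RN × ELC CN RN) :=
  (.cn .A, .conj (exSeq σ (.cn .M)) (.cn (.X 0))) :: T0 n

/-- `T ⊨ c ⊑ d`: the inclusion holds in every model of the TBox `T`. -/
def Entails (T : List (ELC CN RN × ELC CN RN)) (c d : ELC CN RN) : Prop :=
  ∀ I : Interp CN RN, (∀ p ∈ T, I.sem p.1 ⊆ I.sem p.2) → I.sem c ⊆ I.sem d


/-- Countermodel: domain is words over `{r,s}`, with deterministic edges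
`w → w ++ [ρ]`, `A = {[]}`, `M = {σ}`, and each `X_i` the whole domain. -/
def cm (σ : List RN) : Interp CN RN where
  dom := List RN
  cname := fun c => match c with
    | .A => {[]}
    | .M => {σ}
    | .X _ => Set.univ
  rname := fun ρ => {p | p.2 = p.1 ++ [ρ]}

lemma cm_exSeq (σ : List RN) (w : List RN) (c : ELC CN RN) (x : List RN) :
    x ∈ (cm σ).sem (exSeq w c) ↔ (x ++ w) ∈ (cm σ).sem c := by
  induction w generalizing x with
  | nil => simp [exSeq]
  | cons a t ih =>
    simp only [exSeq, List.foldr, Interp.sem]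
    constructor
    · rintro ⟨y, hy, hm⟩
      have : y = x ++ [a] := hy
      subst this
      have := (ih (x ++ [a])).mp hm
      simpa using this
    · intro h
      exact ⟨x ++ [a], rfl, (ih (x ++ [a])).mpr (by simpa using h)⟩

/-- for distinct words `σ, σ'` of length `n` over `{r,s}`,
`T_σ` does not entail `A ⊑ ∃σ'.M`. -/
theorem Tsig_not_entails {n : ℕ} (σ σ' : List RN)
    (h1 : σ.length = n) (h2 : σ'.length = n) (hne : σ ≠ σ') :
    ¬ Entails (Tsig n σ) (.cn .A) (exSeq σ' (.cn .M)) := by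
  intro hE
  have hmodel : ∀ p ∈ Tsig n σ, (cm σ).sem p.1 ⊆ (cm σ).sem p.2 := by
    intro p hp
    rcases List.mem_cons.mp hp with hp | hp
    · subst hp
      intro x hx
      have hx0 : x = [] := hx
      subst hx0
      refine ⟨?_, ?_⟩
      · exact (cm_exSeq σ σ (.cn .M) []).mpr (by simp [cm, Interp.sem]; exact Set.mem_singleton _)
      · trivial
    · simp only [T0, List.mem_map, List.mem_range] at hp
      obtain ⟨i, _, rfl⟩ := hp
      intro x _
      exact ⟨⟨List.append x [RN.r], rfl, trivial⟩, ⟨List.append x [RN.s], rfl, trivial⟩⟩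
  have h0 : ([] : List RN) ∈ (cm σ).sem (.cn .A) := rfl
  have := (cm_exSeq σ σ' (.cn .M) []).mp (hE (cm σ) hmodel h0)
  simp only [List.nil_append] at this
  exact hne this.symm
end

section
/- Let T be an acyclic EL TBox, D an EL concept expression, and suppose T ⊨ A_1 ⊓ ... ⊓ A_n ⊓ ∃r_1.C_1 ⊓ ... ⊓ ∃r_m.C_m ⊑ D, where the A_i are concept names and the C_j are EL concept expressions (m, n ≥ 0). Then: (a) if D is a concept name such that T contains no concept equivalence D ≡ C, there exists i ≤ n such that T ⊨ A_i ⊑ D; (b) if D has the form ∃r.D', then either there exists i ≤ n with T ⊨ A_i ⊑ ∃r.D', or there exists j ≤ m with r_j = r and T ⊨ C_j ⊑ D'. -/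
/-- The concept names occurring in a concept expression. -/
def ELC.names {C R : Type} : ELC C R → Set C
  | .top => ∅
  | .cn a => {a}
  | .conj c d => c.names ∪ d.names
  | .ex _ c => c.names

/-- An axiom of an acyclic TBox: `lhs ⊑ rhs` if `isEq = false`, and the
concept equivalence `lhs ≡ rhs` if `isEq = true`. -/
structure AxEL (C R : Type) where
  lhs : C
  rhs : ELC C R
  isEq : Bool

/-- `I` satisfies the axiom. -/
def satAx {C R : Type} (I : Interp C R) (ax : AxEL C R) : Prop :=
  I.cname ax.lhs ⊆ I.sem ax.rhs ∧ (ax.isEq = true → I.sem ax.rhs ⊆ I.cname ax.lhs)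

/-- An acyclic EL TBox: no concept name occurs more than once as a
left-hand side, and there are no cyclic definitions. -/
def AcyclicTBox {C R : Type} (T : List (AxEL C R)) : Prop :=
  T.Pairwise (fun a b => a.lhs ≠ b.lhs) ∧
  ∀ A : C, ¬ Relation.TransGen
      (fun X Y => ∃ ax ∈ T, ax.lhs = X ∧ Y ∈ ax.rhs.names) A A

/-- `T ⊨ c ⊑ d`: the inclusion holds in every model of `T`. -/
def AEnt {C R : Type} (T : List (AxEL C R)) (c d : ELC C R) : Prop :=
  ∀ I : Interp C R, (∀ ax ∈ T, satAx I ax) → I.sem c ⊆ I.sem d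

/-- Conjunction of a list of concepts (`⊤` for the empty list). -/
def conjList {C R : Type} (l : List (ELC C R)) : ELC C R :=
  l.foldr ELC.conj .top

section Aux
variable {C R : Type}

lemma uniq_lhs {T : List (AxEL C R)} (hp : T.Pairwise (fun a b => a.lhs ≠ b.lhs))
    {a b : AxEL C R} (ha : a ∈ T) (hb : b ∈ T) (h : a.lhs = b.lhs) : a = b := by
  induction T with
  | nil => cases ha
  | cons x t ih =>
    rcases List.pairwise_cons.1 hp with ⟨hx, ht⟩
    rcases List.mem_cons.1 ha with ha | ha
    · rcases List.mem_cons.1 hb with hb | hb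
      · rw [ha, hb]
      · exact absurd (ha ▸ h) (hx _ hb)
    · rcases List.mem_cons.1 hb with hb | hb
      · exact absurd (hb ▸ h).symm (hx _ ha)
      · exact ih ht ha hb

lemma conjList_sem (I : Interp C R) (l : List (ELC C R)) (z : I.dom) :
    z ∈ I.sem (conjList l) ↔ ∀ c ∈ l, z ∈ I.sem c := by
  induction l with
  | nil => simp [conjList, Interp.sem]
  | cons c t ih =>
    simp only [conjList, List.foldr] at ih ⊢
    simp only [Interp.sem, Set.mem_inter_iff, ih, List.mem_cons]
    constructor
    · rintro ⟨h1, h2⟩ c (rfl | hc)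
      · exact h1
      · exact h2 c hc
    · intro hc
      exact ⟨hc _ (Or.inl rfl), fun c h => hc c (Or.inr h)⟩

/-- bundled pointed model of `T` -/
structure PM (T : List (AxEL C R)) where
  I : Interp C R
  sat : ∀ ax ∈ T, satAx I ax
  pt : I.dom

def fullI : Interp C R := ⟨PUnit, fun _ => Set.univ, fun _ => Set.univ⟩

lemma fullI_sem (E : ELC C R) (z : (fullI (C := C) (R := R)).dom) :
    z ∈ (fullI (C := C) (R := R)).sem E := by
  induction E with
  | top => trivial
  | cn A => trivial
  | conj c d ihc ihd => exact ⟨ihc, ihd⟩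
  | ex r c ih => exact ⟨PUnit.unit, trivial, ih⟩

def fullPM (T : List (AxEL C R)) : PM T where
  I := fullI
  sat := fun ax _ => ⟨fun z _ => fullI_sem _ z, fun _ z _ => trivial⟩
  pt := PUnit.unit

lemma exCEx {T : List (AxEL C R)} {c d : ELC C R} (h : ¬ AEnt T c d) :
    Nonempty {pm : PM T // pm.pt ∈ pm.I.sem c ∧ pm.pt ∉ pm.I.sem d} := by
  unfold AEnt at h
  push_neg at h
  obtain ⟨I, hsat, hns⟩ := h
  obtain ⟨z, hz, hz'⟩ := Set.not_subset.1 hns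
  exact ⟨⟨⟨I, hsat, z⟩, hz, hz'⟩⟩

end Aux

section Root
variable {C R : Type} {T : List (AxEL C R)} {ι κ : Type}

def rdom (M : ι → PM T) (N : κ → PM T) : Type :=
  Option ((Σ i, (M i).I.dom) ⊕ (Σ k, (N k).I.dom))

def rI (M : ι → PM T) (N : κ → PM T) (ρ : κ → R) (S : Set C) : Interp C R where
  dom := rdom M N
  cname Q := {z | (z = none ∧ Q ∈ S) ∨
    (∃ i y, y ∈ (M i).I.cname Q ∧ z = some (.inl ⟨i, y⟩)) ∨
    (∃ k y, y ∈ (N k).I.cname Q ∧ z = some (.inr ⟨k, y⟩))}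
  rname s := {p |
    (∃ i y y', (y, y') ∈ (M i).I.rname s ∧ p = (some (.inl ⟨i, y⟩), some (.inl ⟨i, y'⟩))) ∨
    (∃ k y y', (y, y') ∈ (N k).I.rname s ∧ p = (some (.inr ⟨k, y⟩), some (.inr ⟨k, y'⟩))) ∨
    (∃ i y, ((M i).pt, y) ∈ (M i).I.rname s ∧ p = (none, some (.inl ⟨i, y⟩))) ∨
    (∃ k, ρ k = s ∧ p = (none, some (.inr ⟨k, (N k).pt⟩)))}

variable (M : ι → PM T) (N : κ → PM T) (ρ : κ → R)

lemma semM (S : Set C) (E : ELC C R) (i : ι) (y : (M i).I.dom) :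
    (some (.inl ⟨i, y⟩) : rdom M N) ∈ (rI M N ρ S).sem E ↔ y ∈ (M i).I.sem E := by
  induction E generalizing y with
  | top => simp [Interp.sem]; exact trivial
  | cn A =>
    simp only [Interp.sem, rI, Set.mem_setOf_eq]
    constructor
    · rintro (⟨h, -⟩ | ⟨i', y', hy', h⟩ | ⟨k, y', hy', h⟩)
      · cases h
      · obtain ⟨rfl, h2⟩ := Sigma.mk.inj_iff.1 (Sum.inl.inj (Option.some.inj h))
        cases h2; exact hy'
      · cases Option.some.inj h
    · intro hy; exact Or.inr (Or.inl ⟨i, y, hy, rfl⟩)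
  | conj c d ihc ihd =>
    exact and_congr (ihc y) (ihd y)
  | ex s c ih =>
    simp only [Interp.sem, Set.mem_setOf_eq]
    constructor
    · rintro ⟨z, hz, hzc⟩
      rcases hz with ⟨i', y1, y2, he, hp⟩ | ⟨k, y1, y2, he, hp⟩ | ⟨i', y1, he, hp⟩ | ⟨k, he, hp⟩
      · obtain ⟨h1, h2⟩ := Prod.mk_inj.1 hp
        obtain ⟨rfl, hh⟩ := Sigma.mk.inj_iff.1 (Sum.inl.inj (Option.some.inj h1))
        cases hh
        subst h2
        exact ⟨y2, he, (ih _).1 hzc⟩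
      · cases Option.some.inj (Prod.mk_inj.1 hp).1
      · cases (Prod.mk_inj.1 hp).1
      · cases (Prod.mk_inj.1 hp).1
    · rintro ⟨y', he, hy'⟩
      exact ⟨some (.inl ⟨i, y'⟩), Or.inl ⟨i, y, y', he, rfl⟩, (ih _).2 hy'⟩

lemma semN (S : Set C) (E : ELC C R) (k : κ) (y : (N k).I.dom) :
    (some (.inr ⟨k, y⟩) : rdom M N) ∈ (rI M N ρ S).sem E ↔ y ∈ (N k).I.sem E := by
  induction E generalizing y with
  | top => simp [Interp.sem]; exact trivial
  | cn A =>
    simp only [Interp.sem, rI, Set.mem_setOf_eq]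
    constructor
    · rintro (⟨h, -⟩ | ⟨i', y', hy', h⟩ | ⟨k', y', hy', h⟩)
      · cases h
      · cases Option.some.inj h
      · obtain ⟨rfl, h2⟩ := Sigma.mk.inj_iff.1 (Sum.inr.inj (Option.some.inj h))
        cases h2; exact hy'
    · intro hy; exact Or.inr (Or.inr ⟨k, y, hy, rfl⟩)
  | conj c d ihc ihd =>
    exact and_congr (ihc y) (ihd y)
  | ex s c ih =>
    simp only [Interp.sem, Set.mem_setOf_eq]
    constructor
    · rintro ⟨z, hz, hzc⟩
      rcases hz with ⟨i', y1, y2, he, hp⟩ | ⟨k', y1, y2, he, hp⟩ | ⟨i', y1, he, hp⟩ | ⟨k', he, hp⟩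
      · cases Option.some.inj (Prod.mk_inj.1 hp).1
      · obtain ⟨h1, h2⟩ := Prod.mk_inj.1 hp
        obtain ⟨rfl, hh⟩ := Sigma.mk.inj_iff.1 (Sum.inr.inj (Option.some.inj h1))
        cases hh
        subst h2
        exact ⟨y2, he, (ih _).1 hzc⟩
      · cases (Prod.mk_inj.1 hp).1
      · cases (Prod.mk_inj.1 hp).1
    · rintro ⟨y', he, hy'⟩
      exact ⟨some (.inr ⟨k, y'⟩), Or.inr (Or.inl ⟨k, y, y', he, rfl⟩), (ih _).2 hy'⟩

lemma sem_mono {S S' : Set C} (hS : S ⊆ S') (E : ELC C R) (z : rdom M N)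
    (hz : z ∈ (rI M N ρ S).sem E) : z ∈ (rI M N ρ S').sem E := by
  induction E generalizing z with
  | top => trivial
  | cn A =>
    rcases hz with ⟨h1, h2⟩ | h | h
    · exact Or.inl ⟨h1, hS h2⟩
    · exact Or.inr (Or.inl h)
    · exact Or.inr (Or.inr h)
  | conj c d ihc ihd => exact ⟨ihc _ hz.1, ihd _ hz.2⟩
  | ex s c ih =>
    obtain ⟨y, he, hy⟩ := hz
    exact ⟨y, he, ih _ hy⟩

/-- Claim 2: if a designated point satisfies `E`, so does the root. -/
lemma sem_root_of_pt {S : Set C} (hbase : ∀ Q, (∃ i, (M i).pt ∈ (M i).I.cname Q) → Q ∈ S)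
    (E : ELC C R) (i : ι) (hE : (M i).pt ∈ (M i).I.sem E) :
    (none : rdom M N) ∈ (rI M N ρ S).sem E := by
  induction E with
  | top => trivial
  | cn A => exact Or.inl ⟨rfl, hbase A ⟨i, hE⟩⟩
  | conj c d ihc ihd => exact ⟨ihc hE.1, ihd hE.2⟩
  | ex s c ih =>
    obtain ⟨y, he, hy⟩ := hE
    exact ⟨some (.inl ⟨i, y⟩), Or.inr (Or.inr (Or.inl ⟨i, y, he, rfl⟩)),
      (semM M N ρ S c i y).2 hy⟩

/-- The fixpoint operator on the root's concept-name set. -/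
def Fop : Set C →o Set C where
  toFun S := {Q | (∃ i, (M i).pt ∈ (M i).I.cname Q) ∨
    ∃ ax ∈ T, ax.lhs = Q ∧ ax.isEq = true ∧ (none : rdom M N) ∈ (rI M N ρ S).sem ax.rhs}
  monotone' := by
    intro S S' hS Q hQ
    rcases hQ with h | ⟨ax, hax, h1, h2, h3⟩
    · exact Or.inl h
    · exact Or.inr ⟨ax, hax, h1, h2, sem_mono M N ρ hS _ _ h3⟩

def MM : Set C := OrderHom.lfp (Fop M N ρ)

lemma MM_eq : (Fop (T := T) M N ρ) (MM M N ρ) = MM M N ρ := OrderHom.map_lfp _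

lemma MM_base : ∀ Q, (∃ i, (M i).pt ∈ (M i).I.cname Q) → Q ∈ MM M N ρ := by
  intro Q h
  rw [← MM_eq]
  exact Or.inl h

/-- The root model satisfies `T`. -/
lemma root_sat (hp : T.Pairwise (fun a b => a.lhs ≠ b.lhs)) :
    ∀ ax ∈ T, satAx (rI M N ρ (MM M N ρ)) ax := by
  intro ax hax
  constructor
  · rintro z (⟨rfl, hQ⟩ | ⟨i, y, hy, rfl⟩ | ⟨k, y, hy, rfl⟩)
    · rw [← MM_eq] at hQ
      rcases hQ with ⟨i, hi⟩ | ⟨ax', hax', h1, h2, h3⟩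
      · exact sem_root_of_pt M N ρ (MM_base M N ρ) _ i (((M i).sat ax hax).1 hi)
      · cases uniq_lhs hp hax' hax h1
        exact h3
    · exact (semM M N ρ _ _ i y).2 (((M i).sat ax hax).1 hy)
    · exact (semN M N ρ _ _ k y).2 (((N k).sat ax hax).1 hy)
  · intro heq z hz
    match z with
    | none =>
      refine Or.inl ⟨rfl, ?_⟩
      rw [← MM_eq]
      exact Or.inr ⟨ax, hax, rfl, heq, hz⟩
    | some (.inl ⟨i, y⟩) =>
      exact Or.inr (Or.inl ⟨i, y, ((M i).sat ax hax).2 heq ((semM M N ρ _ _ i y).1 hz), rfl⟩)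
    | some (.inr ⟨k, y⟩) =>
      exact Or.inr (Or.inr ⟨k, y, ((N k).sat ax hax).2 heq ((semN M N ρ _ _ k y).1 hz), rfl⟩)

end Root


/-- characterisation of entailment from an acyclic EL TBox.
If `T ⊨ A_1 ⊓ … ⊓ A_n ⊓ ∃r_1.C_1 ⊓ … ⊓ ∃r_m.C_m ⊑ D`, then:
(a) if `D` is a concept name without a defining equivalence in `T`, some
`A_i` satisfies `T ⊨ A_i ⊑ D`; (b) if `D = ∃r.D'`, then either some `A_i`
satisfies `T ⊨ A_i ⊑ ∃r.D'`, or some `r_j = r` with `T ⊨ C_j ⊑ D'`. -/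
theorem acyclic_entailment_characterisation {C R : Type}
    (T : List (AxEL C R)) (hT : AcyclicTBox T)
    (As : List C) (Rs : List (R × ELC C R)) (D : ELC C R)
    (h : AEnt T (conjList (As.map ELC.cn ++ Rs.map fun p => ELC.ex p.1 p.2)) D) :
    (∀ P : C, D = .cn P → (∀ ax ∈ T, ax.lhs = P → ax.isEq = false) →
      ∃ a ∈ As, AEnt T (.cn a) D) ∧
    (∀ (r : R) (D' : ELC C R), D = .ex r D' →
      (∃ a ∈ As, AEnt T (.cn a) (.ex r D')) ∨
      ∃ p ∈ Rs, p.1 = r ∧ AEnt T p.2 D') := by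
  obtain ⟨hp, -⟩ := hT
  constructor
  · rintro P rfl hprim
    by_contra hcon
    push_neg at hcon
    let Mf := fun a : {a // a ∈ As} => Classical.choice (exCEx (hcon a.1 a.2))
    let M : {a // a ∈ As} → PM T := fun a => (Mf a).1
    let N : {p // p ∈ Rs} → PM T := fun _ => fullPM T
    let ρ : {p // p ∈ Rs} → R := fun p => p.1.1
    have hroot : (none : rdom M N) ∈ (rI M N ρ (MM M N ρ)).sem
        (conjList (As.map ELC.cn ++ Rs.map fun p => ELC.ex p.1 p.2)) := by
      refine (conjList_sem _ _ _).2 ?_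
      intro c hc
      rcases List.mem_append.1 hc with hc | hc
      · obtain ⟨a, ha, rfl⟩ := List.mem_map.1 hc
        exact Or.inl ⟨rfl, MM_base M N ρ a ⟨⟨a, ha⟩, (Mf ⟨a, ha⟩).2.1⟩⟩
      · obtain ⟨q, hq, rfl⟩ := List.mem_map.1 hc
        refine ⟨some (.inr ⟨⟨q, hq⟩, (N ⟨q, hq⟩).pt⟩),
          Or.inr (Or.inr (Or.inr ⟨⟨q, hq⟩, rfl, rfl⟩)), ?_⟩
        exact (semN M N ρ _ q.2 _ _).2 (fullI_sem q.2 _)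
    have hD := h _ (root_sat M N ρ hp) hroot
    rcases hD with ⟨-, hP⟩ | ⟨i, y, -, hcontra⟩ | ⟨k, y, -, hcontra⟩
    · rw [← MM_eq] at hP
      rcases hP with ⟨i, hi⟩ | ⟨ax, hax, h1, h2, -⟩
      · exact (Mf i).2.2 hi
      · rw [hprim ax hax h1] at h2; cases h2
    · cases hcontra
    · cases hcontra
  · rintro r D' rfl
    by_contra hcon
    push_neg at hcon
    obtain ⟨h1, h2⟩ := hcon
    let Mf := fun a : {a // a ∈ As} => Classical.choice (exCEx (h1 a.1 a.2))
    have hNex : ∀ q : {p // p ∈ Rs}, Nonempty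
        {pm : PM T // pm.pt ∈ pm.I.sem q.1.2 ∧ (q.1.1 = r → pm.pt ∉ pm.I.sem D')} := by
      intro q
      by_cases hr : q.1.1 = r
      · obtain ⟨⟨pm, hmem, hnm⟩⟩ := exCEx (h2 q.1 q.2 hr)
        exact ⟨⟨pm, hmem, fun _ => hnm⟩⟩
      · exact ⟨⟨fullPM T, fullI_sem _ _, fun hh => absurd hh hr⟩⟩
    let Nf := fun q : {p // p ∈ Rs} => Classical.choice (hNex q)
    let M : {a // a ∈ As} → PM T := fun a => (Mf a).1
    let N : {p // p ∈ Rs} → PM T := fun q => (Nf q).1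
    let ρ : {p // p ∈ Rs} → R := fun q => q.1.1
    have hroot : (none : rdom M N) ∈ (rI M N ρ (MM M N ρ)).sem
        (conjList (As.map ELC.cn ++ Rs.map fun p => ELC.ex p.1 p.2)) := by
      refine (conjList_sem _ _ _).2 ?_
      intro c hc
      rcases List.mem_append.1 hc with hc | hc
      · obtain ⟨a, ha, rfl⟩ := List.mem_map.1 hc
        exact Or.inl ⟨rfl, MM_base M N ρ a ⟨⟨a, ha⟩, (Mf ⟨a, ha⟩).2.1⟩⟩
      · obtain ⟨q, hq, rfl⟩ := List.mem_map.1 hc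
        refine ⟨some (.inr ⟨⟨q, hq⟩, (N ⟨q, hq⟩).pt⟩),
          Or.inr (Or.inr (Or.inr ⟨⟨q, hq⟩, rfl, rfl⟩)), ?_⟩
        exact (semN M N ρ _ q.2 _ _).2 (Nf ⟨q, hq⟩).2.1
    have hD := h _ (root_sat M N ρ hp) hroot
    obtain ⟨z, hedge, hz⟩ := hD
    rcases hedge with ⟨i, y, y', he, hq⟩ | ⟨k, y, y', he, hq⟩ | ⟨i, y, he, hq⟩ | ⟨k, hk, hq⟩
    · exact Option.some_ne_none _ (Prod.mk_inj.1 hq).1.symm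
    · exact Option.some_ne_none _ (Prod.mk_inj.1 hq).1.symm
    · obtain ⟨-, hz2⟩ := Prod.mk_inj.1 hq
      subst hz2
      exact (Mf i).2.2 ⟨y, he, (semM M N ρ _ D' i y).1 hz⟩
    · obtain ⟨-, hz2⟩ := Prod.mk_inj.1 hq
      subst hz2
      exact (Nf k).2.2 hk ((semN M N ρ _ D' k _).1 hz)
end
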